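/- Let μ be a finite measure on a measurable space and let (μ_n) be a sequence of finite measures on the same space such that D(μ‖μ_n) → 0 as n → ∞. Then μ_n converges to μ setwise: for every measurable set A, μ_n(A) → μ(A). -/

import Mathlib

open MeasureTheory Filter Topology ENNReal

open Classical in
/-- Information divergence `D(μ‖ν)`: if `μ ≪ ν` it is `∫ (ρ ln ρ − ρ + 1) dν` where
`ρ` is the density of `μ` with respect to `ν`, and `∞` otherwise. -/
noncomputable def infoDiv {Ω : Type*} [MeasurableSpace Ω] (μ ν : Measure Ω) : ℝ≥0∞ :=
  if μ ≪ ν then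
    ∫⁻ x, ENNReal.ofReal ((μ.rnDeriv ν x).toReal * Real.log (μ.rnDeriv ν x).toReal
      - (μ.rnDeriv ν x).toReal + 1) ∂ν
  else ∞


noncomputable def klF (x : ℝ) : ℝ := x * Real.log x - x + 1

lemma klF_nonneg {x : ℝ} (hx : 0 ≤ x) : 0 ≤ klF x := by
  rcases eq_or_lt_of_le hx with h | h
  · simp [klF, ← h]
  · have h1 : Real.log x⁻¹ ≤ x⁻¹ - 1 := Real.log_le_sub_one_of_pos (by positivity)
    rw [Real.log_inv] at h1
    have h2 : x * (1 - x⁻¹) ≤ x * Real.log x := by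
      apply mul_le_mul_of_nonneg_left _ hx; linarith
    have h3 : x * (1 - x⁻¹) = x - 1 := by field_simp
    simp only [klF]; nlinarith

lemma klF_pos {x : ℝ} (hx : 0 < x) (hx1 : x ≠ 1) : 0 < klF x := by
  have h1 : Real.log x⁻¹ < x⁻¹ - 1 :=
    Real.log_lt_sub_one_of_pos (by positivity) (by simp only [ne_eq, inv_eq_one]; exact hx1)
  rw [Real.log_inv] at h1
  have h2 : x * (1 - x⁻¹) < x * Real.log x := by
    apply mul_lt_mul_of_pos_left _ hx; linarith
  have h3 : x * (1 - x⁻¹) = x - 1 := by field_simp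
  simp only [klF]; nlinarith

lemma klF_convex : ConvexOn ℝ (Set.Ici (0:ℝ)) klF := by
  have haff : ConvexOn ℝ (Set.Ici (0:ℝ)) (fun x => 1 - x) := by
    refine ⟨convex_Ici 0, ?_⟩
    intro x _ y _ a b _ _ hab
    simp only [smul_eq_mul]
    nlinarith
  have h := Real.convexOn_mul_log.add haff
  have : klF = fun x => (fun x => x * Real.log x) x + (fun x => 1 - x) x := by
    funext x; simp [klF]; ring
  rw [this]; exact h

lemma klF_one : klF 1 = 0 := by simp [klF]

lemma klF_chord_right {δ x : ℝ} (hδ : 0 < δ) (hx : 1 + δ ≤ x) :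
    klF (1 + δ) * (x - 1) ≤ klF x * δ := by
  rcases eq_or_lt_of_le hx with h | h
  · rw [← h]; ring_nf; exact le_refl _
  · have h1 : (0:ℝ) < x - 1 := by linarith
    have hab : (x - 1 - δ)/(x-1) + δ/(x-1) = 1 := by
      rw [← add_div]
      rw [show x - 1 - δ + δ = x - 1 by ring, div_self h1.ne']
    have key : klF (((x - 1 - δ)/(x-1)) • (1:ℝ) + (δ/(x-1)) • x)
        ≤ ((x - 1 - δ)/(x-1)) • klF 1 + (δ/(x-1)) • klF x :=
      klF_convex.2 (Set.mem_Ici.2 (by norm_num : (0:ℝ) ≤ 1))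
        (Set.mem_Ici.2 (by linarith : (0:ℝ) ≤ x))
        (div_nonneg (by linarith) h1.le) (div_nonneg hδ.le h1.le) hab
    have hpt : ((x - 1 - δ)/(x-1)) • (1:ℝ) + (δ/(x-1)) • x = 1 + δ := by
      simp only [smul_eq_mul]; field_simp [h1.ne']; ring
    rw [hpt, klF_one, smul_eq_mul, smul_eq_mul, mul_zero, zero_add] at key
    have h2 := mul_le_mul_of_nonneg_right key h1.le
    have heq : δ / (x - 1) * klF x * (x - 1) = klF x * δ := by
      field_simp
    linarith [h2, heq]

lemma klF_chord_left {δ x : ℝ} (hδ : 0 < δ) (hδ1 : δ < 1) (hx0 : 0 ≤ x) (hx : x ≤ 1 - δ) :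
    klF (1 - δ) * (1 - x) ≤ klF x * δ := by
  have h1 : (0:ℝ) < 1 - x := by linarith
  have hab : δ/(1-x) + (1 - δ - x)/(1-x) = 1 := by
    rw [← add_div]
    rw [show δ + (1 - δ - x) = 1 - x by ring, div_self h1.ne']
  have key : klF ((δ/(1-x)) • x + ((1 - δ - x)/(1-x)) • (1:ℝ))
      ≤ (δ/(1-x)) • klF x + ((1 - δ - x)/(1-x)) • klF 1 :=
    klF_convex.2 (Set.mem_Ici.2 hx0) (Set.mem_Ici.2 (by norm_num : (0:ℝ) ≤ 1))
      (div_nonneg hδ.le h1.le) (div_nonneg (by linarith) h1.le) hab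
  have hpt : (δ/(1-x)) • x + ((1 - δ - x)/(1-x)) • (1:ℝ) = 1 - δ := by
    simp only [smul_eq_mul]; field_simp [h1.ne']; ring
  rw [hpt, klF_one, smul_eq_mul, smul_eq_mul, mul_zero, add_zero] at key
  have h2 := mul_le_mul_of_nonneg_right key h1.le
  have heq : δ / (1 - x) * klF x * (1 - x) = klF x * δ := by
    field_simp
  linarith [h2, heq]

lemma abs_sub_one_le {δ x : ℝ} (hδ : 0 < δ) (hδ1 : δ < 1) (hx : 0 ≤ x) :
    |x - 1| ≤ δ + δ / min (klF (1+δ)) (klF (1-δ)) * klF x := by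
  have hc : 0 < min (klF (1+δ)) (klF (1-δ)) :=
    lt_min (klF_pos (by linarith) (by intro h; linarith [h]))
      (klF_pos (by linarith) (by intro h; linarith [h]))
  set c := min (klF (1+δ)) (klF (1-δ)) with hcdef
  have hfx : 0 ≤ klF x := klF_nonneg hx
  rcases le_or_gt (|x - 1|) δ with hle | hgt
  · have : 0 ≤ δ / c * klF x := by positivity
    linarith
  · have hmain : c * |x - 1| ≤ δ * klF x := by
      rcases le_or_gt 1 x with hx1 | hx1
      · have hxx : 1 + δ ≤ x := by
          rw [abs_of_nonneg (by linarith)] at hgt; linarith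
        have := klF_chord_right hδ hxx
        have hcl : c ≤ klF (1 + δ) := min_le_left _ _
        rw [abs_of_nonneg (by linarith)]
        nlinarith [klF_nonneg (by linarith : (0:ℝ) ≤ x)]
      · have hxx : x ≤ 1 - δ := by
          rw [abs_of_neg (by linarith)] at hgt; linarith
        have := klF_chord_left hδ hδ1 hx hxx
        have hcl : c ≤ klF (1 - δ) := min_le_right _ _
        rw [abs_of_neg (by linarith)]
        nlinarith
    have h2 : |x - 1| - δ ≤ δ * klF x / c := by
      rw [le_div_iff₀ hc]; nlinarith [abs_nonneg (x-1)]
    have h3 : δ / c * klF x = δ * klF x / c := by ring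
    linarith

section MeasurePart
variable {Ω : Type*} [MeasurableSpace Ω]


/-- Total-variation-type error term. -/
noncomputable def Terr (μ ν : Measure Ω) : ℝ≥0∞ :=
  ∫⁻ x, ENNReal.ofReal |(μ.rnDeriv ν x).toReal - 1| ∂ν

lemma measure_le_add_Terr (μ ν : Measure Ω) [IsFiniteMeasure μ] [IsFiniteMeasure ν]
    (hac : μ ≪ ν) (S : Set Ω) :
    ν S ≤ μ S + Terr μ ν ∧ μ S ≤ ν S + Terr μ ν := by
  have hρ : ∀ᵐ x ∂ν, μ.rnDeriv ν x < ∞ := Measure.rnDeriv_lt_top μ ν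
  have hmeas : Measurable (μ.rnDeriv ν) := Measure.measurable_rnDeriv μ ν
  have hμS : μ S = ∫⁻ x in S, μ.rnDeriv ν x ∂ν := (Measure.setLIntegral_rnDeriv hac S).symm
  have hνS : ν S = ∫⁻ _ in S, 1 ∂ν := (setLIntegral_one S).symm
  constructor
  · rw [hνS, hμS]
    calc ∫⁻ _ in S, 1 ∂ν
        ≤ ∫⁻ x in S, (μ.rnDeriv ν x + ENNReal.ofReal |(μ.rnDeriv ν x).toReal - 1|) ∂ν := by
          refine lintegral_mono_ae (ae_restrict_of_ae ?_)
          filter_upwards [hρ] with x hx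
          have h1 : (1:ℝ≥0∞) ≤ ENNReal.ofReal ((μ.rnDeriv ν x).toReal
              + |(μ.rnDeriv ν x).toReal - 1|) := by
            rw [← ENNReal.ofReal_one]
            exact ENNReal.ofReal_le_ofReal
              (by cases abs_cases ((μ.rnDeriv ν x).toReal - 1) <;> linarith)
          rwa [ENNReal.ofReal_add ENNReal.toReal_nonneg (abs_nonneg _),
            ENNReal.ofReal_toReal hx.ne] at h1
      _ = ∫⁻ x in S, μ.rnDeriv ν x ∂ν
            + ∫⁻ x in S, ENNReal.ofReal |(μ.rnDeriv ν x).toReal - 1| ∂ν :=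
          lintegral_add_left hmeas _
      _ ≤ _ := add_le_add_right (setLIntegral_le_lintegral _ _) _
  · rw [hνS, hμS]
    calc ∫⁻ x in S, μ.rnDeriv ν x ∂ν
        ≤ ∫⁻ x in S, (1 + ENNReal.ofReal |(μ.rnDeriv ν x).toReal - 1|) ∂ν := by
          refine lintegral_mono_ae (ae_restrict_of_ae ?_)
          filter_upwards [hρ] with x hx
          have h1 : ENNReal.ofReal ((μ.rnDeriv ν x).toReal)
              ≤ ENNReal.ofReal (1 + |(μ.rnDeriv ν x).toReal - 1|) :=
            ENNReal.ofReal_le_ofReal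
              (by cases abs_cases ((μ.rnDeriv ν x).toReal - 1) <;> linarith)
          rwa [ENNReal.ofReal_add zero_le_one (abs_nonneg _), ENNReal.ofReal_one,
            ENNReal.ofReal_toReal hx.ne] at h1
      _ = ∫⁻ _ in S, 1 ∂ν
            + ∫⁻ x in S, ENNReal.ofReal |(μ.rnDeriv ν x).toReal - 1| ∂ν :=
          lintegral_add_left measurable_const _
      _ ≤ _ := add_le_add_right (setLIntegral_le_lintegral _ _) _

lemma Terr_le (μ ν : Measure Ω) {δ : ℝ} (hδ0 : 0 < δ) (hδ1 : δ < 1)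
    (hc : 0 < min (klF (1+δ)) (klF (1-δ))) :
    Terr μ ν ≤ ENNReal.ofReal δ * ν Set.univ
      + ENNReal.ofReal (δ / min (klF (1+δ)) (klF (1-δ)))
        * ∫⁻ x, ENNReal.ofReal (klF ((μ.rnDeriv ν x).toReal)) ∂ν := by
  set c := min (klF (1+δ)) (klF (1-δ)) with hcdef
  calc Terr μ ν
      ≤ ∫⁻ x, (ENNReal.ofReal δ
          + ENNReal.ofReal (δ / c) * ENNReal.ofReal (klF ((μ.rnDeriv ν x).toReal))) ∂ν := by
        refine lintegral_mono fun x => ?_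
        have hp := abs_sub_one_le hδ0 hδ1 (ENNReal.toReal_nonneg (a := μ.rnDeriv ν x))
        calc ENNReal.ofReal |(μ.rnDeriv ν x).toReal - 1|
            ≤ ENNReal.ofReal (δ + δ / c * klF ((μ.rnDeriv ν x).toReal)) :=
              ENNReal.ofReal_le_ofReal hp
          _ = ENNReal.ofReal δ
              + ENNReal.ofReal (δ / c * klF ((μ.rnDeriv ν x).toReal)) :=
              ENNReal.ofReal_add hδ0.le
                (mul_nonneg (div_nonneg hδ0.le hc.le) (klF_nonneg ENNReal.toReal_nonneg))
          _ = ENNReal.ofReal δ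
              + ENNReal.ofReal (δ / c) * ENNReal.ofReal (klF ((μ.rnDeriv ν x).toReal)) := by
              rw [ENNReal.ofReal_mul (div_nonneg hδ0.le hc.le)]
    _ = ∫⁻ _, ENNReal.ofReal δ ∂ν
          + ∫⁻ x, ENNReal.ofReal (δ / c) * ENNReal.ofReal (klF ((μ.rnDeriv ν x).toReal)) ∂ν :=
        lintegral_add_left measurable_const _
    _ = _ := by
        rw [lintegral_const, lintegral_const_mul' _ _ ENNReal.ofReal_ne_top]


/-- The δ used for a given μ and target accuracy e. -/
noncomputable def dlt (μ : Measure Ω) (e : ℝ) : ℝ :=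
  min (1/2) (e / (4 * (μ Set.univ).toReal + 4))

noncomputable def cst (μ : Measure Ω) (e : ℝ) : ℝ :=
  min (klF (1 + dlt μ e)) (klF (1 - dlt μ e))

noncomputable def Bnd (μ : Measure Ω) (e : ℝ) : ℝ≥0∞ :=
  ENNReal.ofReal (e/4 * (cst μ e / dlt μ e))

lemma dlt_pos (μ : Measure Ω) {e : ℝ} (he : 0 < e) : 0 < dlt μ e := by
  have : (0:ℝ) ≤ (μ Set.univ).toReal := ENNReal.toReal_nonneg
  refine lt_min (by norm_num) (by positivity)

lemma dlt_le_half (μ : Measure Ω) (e : ℝ) : dlt μ e ≤ 1/2 := min_le_left _ _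

lemma cst_pos (μ : Measure Ω) {e : ℝ} (he : 0 < e) : 0 < cst μ e := by
  have h1 := dlt_pos μ he
  have h2 := dlt_le_half μ e
  exact lt_min (klF_pos (by linarith) (by intro hh; linarith))
    (klF_pos (by linarith) (by intro hh; linarith))

lemma Bnd_pos (μ : Measure Ω) {e : ℝ} (he : 0 < e) : 0 < Bnd μ e := by
  have h1 := dlt_pos μ he
  have h2 := cst_pos μ he
  exact ENNReal.ofReal_pos.2 (by positivity)

lemma key_event (μ ν : Measure Ω) [IsFiniteMeasure μ] [IsFiniteMeasure ν]
    {e : ℝ} (he : 0 < e) (hD : infoDiv μ ν < Bnd μ e) (S : Set Ω) :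
    ν S ≤ μ S + ENNReal.ofReal e ∧ μ S ≤ ν S + ENNReal.ofReal e := by
  set δ := dlt μ e with hδdef
  set c := cst μ e with hcdef
  have hδ0 : 0 < δ := dlt_pos μ he
  have hδh : δ ≤ 1/2 := dlt_le_half μ e
  have hδ1 : δ < 1 := by linarith
  have hc : 0 < c := cst_pos μ he
  -- absolute continuity
  have hac : μ ≪ ν := by
    by_contra hnac
    rw [infoDiv, if_neg hnac] at hD
    exact (not_top_lt) (hD.trans_le le_top)
  set D := ∫⁻ x, ENNReal.ofReal (klF ((μ.rnDeriv ν x).toReal)) ∂ν with hDdef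
  have hDval : infoDiv μ ν = D := by
    rw [infoDiv, if_pos hac]; rfl
  rw [hDval] at hD
  have hDne : D ≠ ∞ := (hD.trans_le le_top).ne
  set T := Terr μ ν with hTdef
  have h1 : T ≤ ENNReal.ofReal δ * ν Set.univ + ENNReal.ofReal (δ / c) * D :=
    Terr_le μ ν hδ0 hδ1 hc
  have h2 : ν Set.univ ≤ μ Set.univ + T := (measure_le_add_Terr μ ν hac Set.univ).1
  have hTne : T ≠ ∞ := by
    refine (h1.trans_lt ?_).ne
    exact ENNReal.add_lt_top.2 ⟨ENNReal.mul_lt_top ENNReal.ofReal_lt_top (measure_lt_top ν _),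
      ENNReal.mul_lt_top ENNReal.ofReal_lt_top hDne.lt_top⟩
  set X := ENNReal.ofReal δ * μ Set.univ + ENNReal.ofReal (δ / c) * D with hXdef
  have hδhalf : ENNReal.ofReal δ ≤ 2⁻¹ := by
    rw [show ((2:ℝ≥0∞)⁻¹) = ENNReal.ofReal (1/2) by
      rw [ENNReal.ofReal_div_of_pos (by norm_num), ENNReal.ofReal_one, ENNReal.ofReal_ofNat,
        one_div]]
    exact ENNReal.ofReal_le_ofReal hδh
  have hX : T ≤ X + 2⁻¹ * T := by
    calc T ≤ ENNReal.ofReal δ * ν Set.univ + ENNReal.ofReal (δ / c) * D := h1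
      _ ≤ ENNReal.ofReal δ * (μ Set.univ + T) + ENNReal.ofReal (δ / c) * D :=
          add_le_add_left (mul_le_mul_right h2 _) _
      _ = (ENNReal.ofReal δ * μ Set.univ + ENNReal.ofReal (δ / c) * D)
            + ENNReal.ofReal δ * T := by rw [mul_add]; ring
      _ ≤ X + 2⁻¹ * T := add_le_add_right (mul_le_mul_left hδhalf _) _
  have hhalf : 2⁻¹ * T ≤ X := by
    have hT2 : 2⁻¹ * T + 2⁻¹ * T = T := by
      rw [← add_mul, ENNReal.inv_two_add_inv_two, one_mul]
    have hX' : 2⁻¹ * T + 2⁻¹ * T ≤ X + 2⁻¹ * T := hT2.le.trans hX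
    exact (ENNReal.add_le_add_iff_right (by
      exact ENNReal.mul_lt_top (by norm_num) hTne.lt_top |>.ne)).1 hX'
  have hT2X : T ≤ 2 * X := by
    calc T = 2 * (2⁻¹ * T) := by
          rw [← mul_assoc, ENNReal.mul_inv_cancel (by norm_num) (by norm_num), one_mul]
      _ ≤ 2 * X := mul_le_mul_right hhalf _
  -- bound 2 * X ≤ ofReal e
  set m := (μ Set.univ).toReal with hmdef
  have hm0 : 0 ≤ m := ENNReal.toReal_nonneg
  have hδe : δ * (4 * m + 4) ≤ e := by
    calc δ * (4 * m + 4) ≤ (e / (4 * m + 4)) * (4 * m + 4) := by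
          apply mul_le_mul_of_nonneg_right _ (by linarith)
          exact min_le_right _ _
      _ = e := by field_simp
  have hb1 : 2 * (ENNReal.ofReal δ * μ Set.univ) ≤ ENNReal.ofReal (e/2) := by
    rw [show μ Set.univ = ENNReal.ofReal m from (ENNReal.ofReal_toReal (measure_ne_top μ _)).symm,
      ← ENNReal.ofReal_mul hδ0.le, show (2:ℝ≥0∞) = ENNReal.ofReal 2 by
        rw [ENNReal.ofReal_ofNat], ← ENNReal.ofReal_mul (by norm_num)]
    exact ENNReal.ofReal_le_ofReal (by nlinarith)
  have hb2 : 2 * (ENNReal.ofReal (δ / c) * D) ≤ ENNReal.ofReal (e/2) := by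
    have hD' : D ≤ ENNReal.ofReal (e/4 * (c/δ)) := hD.le
    calc 2 * (ENNReal.ofReal (δ / c) * D)
        ≤ 2 * (ENNReal.ofReal (δ / c) * ENNReal.ofReal (e/4 * (c/δ))) := by
          exact mul_le_mul_right (mul_le_mul_right hD' _) _
      _ = 2 * ENNReal.ofReal (δ / c * (e/4 * (c/δ))) := by
          rw [ENNReal.ofReal_mul (div_nonneg hδ0.le hc.le)]
      _ = 2 * ENNReal.ofReal (e/4) := by
          congr 1
          congr 1
          field_simp
      _ = ENNReal.ofReal (e/2) := by
          rw [show (2:ℝ≥0∞) = ENNReal.ofReal 2 by rw [ENNReal.ofReal_ofNat],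
            ← ENNReal.ofReal_mul (by norm_num)]
          congr 1
          ring
  have hTe : T ≤ ENNReal.ofReal e := by
    calc T ≤ 2 * X := hT2X
      _ = 2 * (ENNReal.ofReal δ * μ Set.univ) + 2 * (ENNReal.ofReal (δ / c) * D) := by
          rw [hXdef, mul_add]
      _ ≤ ENNReal.ofReal (e/2) + ENNReal.ofReal (e/2) := add_le_add hb1 hb2
      _ = ENNReal.ofReal e := by
          rw [← ENNReal.ofReal_add (by linarith) (by linarith)]
          norm_num
  obtain ⟨ha, hb⟩ := measure_le_add_Terr μ ν hac S
  exact ⟨ha.trans (add_le_add_right hTe _), hb.trans (add_le_add_right hTe _)⟩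

end MeasurePart

/-- If `D(μ‖μₙ) → 0` then `μₙ` converges to `μ` setwise. -/
theorem setwise_convergence_of_infoDiv_tendsto_zero
    {Ω : Type*} [MeasurableSpace Ω] (μ : Measure Ω) [IsFiniteMeasure μ]
    (μn : ℕ → Measure Ω) (hfin : ∀ n, IsFiniteMeasure (μn n))
    (h : Tendsto (fun n => infoDiv μ (μn n)) atTop (𝓝 0)) :
    ∀ A : Set Ω, MeasurableSet A → Tendsto (fun n => μn n A) atTop (𝓝 (μ A)) := by
  intro A hA
  rw [ENNReal.tendsto_nhds (measure_ne_top μ A)]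
  intro ε hε
  set E := min ε 1 with hE
  have hE0 : 0 < E := lt_min hε zero_lt_one
  have hEne : E ≠ ∞ := ((min_le_right ε 1).trans_lt (by norm_num)).ne
  set e := E.toReal with hedef
  have he : 0 < e := ENNReal.toReal_pos hE0.ne' hEne
  have hEe : ENNReal.ofReal e = E := ENNReal.ofReal_toReal hEne
  have hev : ∀ᶠ n in atTop, infoDiv μ (μn n) < Bnd μ e :=
    h.eventually_lt_const (Bnd_pos μ he)
  filter_upwards [hev] with n hn
  haveI := hfin n
  obtain ⟨h1, h2⟩ := key_event μ (μn n) he hn A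
  rw [hEe] at h1 h2
  have hEε : E ≤ ε := min_le_left _ _
  constructor
  · rw [tsub_le_iff_right]
    exact h2.trans (add_le_add_right ((le_refl E).trans hEε) _)
  · exact h1.trans (add_le_add_right hEε _)
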